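/- Let n, m, N be positive integers, let M(1), …, M(N) be real symmetric positive semidefinite (n+m)×(n+m) matrices partitioned as M(l) = [[A(l), B(l)],[B(l)', C(l)]] with A(l) of size n×n, and let P₁, …, P_N ≥ 0 with ∑_l P_l = 1. For a positive semidefinite block matrix M = [[A, B],[B', C]] write S(M) = A − B W B' for any generalized inverse W of C (this value does not depend on the choice of W). If Φ is a function from real symmetric n×n matrices to ℝ that is concave and nondecreasing with respect to the Loewner order ⪯, then ∑_{l=1}^N P_l Φ(S(M(l))) ≤ Φ(S(∑_{l=1}^N P_l M(l))). -/

import Mathlib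

open Matrix Finset

section Helpers

lemma psd_smul {k : Type*} [Fintype k] {M : Matrix k k ℝ} (hM : M.PosSemidef) {c : ℝ}
    (hc : 0 ≤ c) : (c • M).PosSemidef := by
  refine ⟨?_, fun x => ?_⟩
  · unfold Matrix.IsHermitian
    rw [conjTranspose_smul, hM.1.eq]
    simp
  · exact (hM.smul hc).2 x

lemma psd_sum {k ι : Type*} [Fintype k] (s : Finset ι) (f : ι → Matrix k k ℝ)
    (h : ∀ i ∈ s, (f i).PosSemidef) : (∑ i ∈ s, f i).PosSemidef := by
  classical
  induction s using Finset.cons_induction with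
  | empty => simpa using Matrix.PosSemidef.zero
  | cons a t ha ih =>
    rw [Finset.sum_cons]
    exact (h a (Finset.mem_cons_self a t)).add (ih fun i hi => h i (Finset.mem_cons_of_mem hi))

lemma herm_sum {k ι : Type*} [Fintype k] (s : Finset ι) (f : ι → Matrix k k ℝ)
    (h : ∀ i ∈ s, (f i).IsHermitian) : (∑ i ∈ s, f i).IsHermitian := by
  unfold Matrix.IsHermitian
  rw [conjTranspose_sum]
  exact Finset.sum_congr rfl fun i hi => (h i hi).eq

lemma herm_smul {k : Type*} [Fintype k] {M : Matrix k k ℝ} (hM : M.IsHermitian) (c : ℝ) :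
    (c • M).IsHermitian := by
  unfold Matrix.IsHermitian
  rw [conjTranspose_smul, hM.eq]
  simp

end Helpers

section Schur

variable {p q : Type*} [Fintype p] [Fintype q]

lemma genInv_range (A : Matrix p p ℝ) (B : Matrix p q ℝ) (C W : Matrix q q ℝ)
    (h : (Matrix.fromBlocks A B Bᵀ C).PosSemidef) (hW : C * W * C = C) :
    B * W * C = B := by
  obtain ⟨G, hG⟩ : ∃ G : Matrix (p ⊕ q) (p ⊕ q) ℝ, Matrix.fromBlocks A B Bᵀ C = Gᴴ * G := by
    classical
    open scoped MatrixOrder Matrix.Norms.L2Operator in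
    obtain ⟨G, hG⟩ := CStarAlgebra.nonneg_iff_eq_star_mul_self.mp h.nonneg
    exact ⟨G, by simpa [star_eq_conjTranspose] using hG⟩
  set G₁ := G.submatrix id Sum.inl with hG₁
  set G₂ := G.submatrix id Sum.inr with hG₂
  have hB : G₁ᵀ * G₂ = B := by
    ext i j
    have := congrFun (congrFun hG (Sum.inl i)) (Sum.inr j)
    simp [Matrix.fromBlocks, Matrix.mul_apply, Matrix.conjTranspose_apply] at this
    simpa [Matrix.mul_apply, hG₁, hG₂] using this.symm
  have hC : G₂ᵀ * G₂ = C := by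
    ext i j
    have := congrFun (congrFun hG (Sum.inr i)) (Sum.inr j)
    simp [Matrix.fromBlocks, Matrix.mul_apply, Matrix.conjTranspose_apply] at this
    simpa [Matrix.mul_apply, hG₂] using this.symm
  have hCt : Cᵀ = C := by rw [← hC, Matrix.transpose_mul, Matrix.transpose_transpose]
  have hW' : C * Wᵀ * C = C := by
    have := congrArg Matrix.transpose hW
    rw [Matrix.transpose_mul, Matrix.transpose_mul, hCt, ← Matrix.mul_assoc] at this
    exact this
  have hC' : ∀ X : Matrix q q ℝ, G₂ᵀ * (G₂ * X) = C * X := fun X => by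
    rw [← Matrix.mul_assoc, hC]
  have hW2 : C * (W * C) = C := by rw [← Matrix.mul_assoc, hW]
  have hW2' : C * (Wᵀ * C) = C := by rw [← Matrix.mul_assoc, hW']
  have key : G₂ * (W * C) = G₂ := by
    have hzero : (G₂ * (W * C) - G₂)ᵀ * (G₂ * (W * C) - G₂) = 0 := by
      have e1 : (G₂ * (W * C))ᵀ * (G₂ * (W * C)) = C := by
        simp only [Matrix.transpose_mul, hCt, Matrix.mul_assoc]
        rw [hC', hW2, hW2']
      have e2 : (G₂ * (W * C))ᵀ * G₂ = C := by
        simp only [Matrix.transpose_mul, hCt, Matrix.mul_assoc]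
        rw [hC, hW2']
      have e3 : G₂ᵀ * (G₂ * (W * C)) = C := by rw [hC', hW2]
      rw [Matrix.transpose_sub, Matrix.sub_mul, Matrix.mul_sub, Matrix.mul_sub, e1, e2, e3, hC]
      abel
    have h0 : G₂ * (W * C) - G₂ = 0 := by
      have := Matrix.conjTranspose_mul_self_eq_zero (A := G₂ * (W * C) - G₂)
      rw [Matrix.conjTranspose_eq_transpose_of_trivial] at this
      exact this.mp hzero
    exact sub_eq_zero.mp h0
  rw [← hB]
  simp only [Matrix.mul_assoc]
  rw [key]

variable (A : Matrix p p ℝ) (B : Matrix p q ℝ) (C W : Matrix q q ℝ)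
  (h : (Matrix.fromBlocks A B Bᵀ C).PosSemidef) (hW : C * W * C = C)

include h hW

lemma hCpsd : C.PosSemidef := by
  have := h.submatrix Sum.inr
  have e : (Matrix.fromBlocks A B Bᵀ C).submatrix Sum.inr Sum.inr = C := by
    ext i j; simp [Matrix.fromBlocks]
  rwa [e] at this

lemma hCt : Cᵀ = C := by
  have := (hCpsd A B C W h hW).isHermitian
  rwa [Matrix.IsHermitian, Matrix.conjTranspose_eq_transpose_of_trivial] at this

lemma hCWtBt : C * (Wᵀ * Bᵀ) = Bᵀ := by
  have := congrArg Matrix.transpose (genInv_range A B C W h hW)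
  rwa [Matrix.transpose_mul, Matrix.transpose_mul, hCt A B C W h hW, ← Matrix.mul_assoc,
    Matrix.mul_assoc] at this

lemma hBWtB : B * (Wᵀ * Bᵀ) = B * W * Bᵀ := by
  calc B * (Wᵀ * Bᵀ) = (B * W * C) * (Wᵀ * Bᵀ) := by rw [genInv_range A B C W h hW]
    _ = B * (W * (C * (Wᵀ * Bᵀ))) := by simp only [Matrix.mul_assoc]
    _ = B * W * Bᵀ := by rw [hCWtBt A B C W h hW, Matrix.mul_assoc]

lemma schur_psd : (A - B * W * Bᵀ).PosSemidef := by
  classical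
  have hcong := h.conjTranspose_mul_mul_same (Matrix.fromRows (1 : Matrix p p ℝ) (-(Wᵀ * Bᵀ)))
  have e : (Matrix.fromRows (1 : Matrix p p ℝ) (-(Wᵀ * Bᵀ)))ᴴ * Matrix.fromBlocks A B Bᵀ C *
      Matrix.fromRows (1 : Matrix p p ℝ) (-(Wᵀ * Bᵀ)) = A - B * W * Bᵀ := by
    rw [Matrix.conjTranspose_eq_transpose_of_trivial, Matrix.transpose_fromRows,
      Matrix.mul_assoc, Matrix.fromBlocks_mul_fromRows, Matrix.fromCols_mul_fromRows]
    simp only [Matrix.mul_one, Matrix.transpose_one, Matrix.mul_neg, Matrix.transpose_neg,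
      Matrix.transpose_mul, Matrix.transpose_transpose, Matrix.neg_mul, Matrix.one_mul,
      Matrix.mul_sub, Matrix.sub_mul]
    rw [hCWtBt A B C W h hW, hBWtB A B C W h hW]
    simp only [Matrix.mul_assoc]
    abel_nf
    simp [Matrix.mul_zero]
  rwa [e] at hcong

lemma schur_diff_psd (X : Matrix p q ℝ) :
    ((A - X * Bᵀ - B * Xᵀ + X * C * Xᵀ) - (A - B * W * Bᵀ)).PosSemidef := by
  have key : (X - B * W) * C * (X - B * W)ᵀ =
      (A - X * Bᵀ - B * Xᵀ + X * C * Xᵀ) - (A - B * W * Bᵀ) := by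
    rw [Matrix.transpose_sub, Matrix.transpose_mul]
    simp only [Matrix.sub_mul, Matrix.mul_sub]
    rw [Matrix.mul_assoc X C (Wᵀ * Bᵀ), hCWtBt A B C W h hW]
    rw [genInv_range A B C W h hW, hBWtB A B C W h hW]
    abel
  rw [← key]
  have := (hCpsd A B C W h hW).mul_mul_conjTranspose_same (X - B * W)
  rwa [Matrix.conjTranspose_eq_transpose_of_trivial] at this

end Schur

lemma jensen_concave {kk : ℕ} {ι : Type*} (Φ : Matrix (Fin kk) (Fin kk) ℝ → ℝ)
    (hconc : ∀ lam : ℝ, 0 ≤ lam → lam ≤ 1 → ∀ M₁ M₂ : Matrix (Fin kk) (Fin kk) ℝ,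
      M₁.IsHermitian → M₂.IsHermitian →
      lam * Φ M₁ + (1 - lam) * Φ M₂ ≤ Φ (lam • M₁ + (1 - lam) • M₂))
    (s : Finset ι) :
    ∀ (P : ι → ℝ) (f : ι → Matrix (Fin kk) (Fin kk) ℝ),
      (∀ i ∈ s, 0 ≤ P i) → (∑ i ∈ s, P i = 1) → (∀ i ∈ s, (f i).IsHermitian) →
      ∑ i ∈ s, P i * Φ (f i) ≤ Φ (∑ i ∈ s, P i • f i) := by
  classical
  induction s using Finset.cons_induction with
  | empty => intro P f _ h1 _; simp at h1
  | cons a t ha ih =>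
    intro P f hP0 hP1 hf
    rw [Finset.sum_cons] at hP1
    rw [Finset.sum_cons, Finset.sum_cons]
    by_cases hpa : P a = 1
    · have hsum0 : ∑ i ∈ t, P i = 0 := by rw [hpa] at hP1; linarith
      have ht0 : ∀ i ∈ t, P i = 0 :=
        (Finset.sum_eq_zero_iff_of_nonneg
          (fun j hj => hP0 j (Finset.mem_cons_of_mem hj))).mp hsum0
      have e1 : ∑ i ∈ t, P i * Φ (f i) = 0 :=
        Finset.sum_eq_zero fun i hi => by rw [ht0 i hi]; ring
      have e2 : ∑ i ∈ t, P i • f i = 0 :=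
        Finset.sum_eq_zero fun i hi => by rw [ht0 i hi]; simp
      rw [e1, e2, hpa]
      simp
    · have hl0 : 0 ≤ P a := hP0 a (Finset.mem_cons_self a t)
      have htnn : 0 ≤ ∑ i ∈ t, P i :=
        Finset.sum_nonneg fun i hi => hP0 i (Finset.mem_cons_of_mem hi)
      have hl1 : P a ≤ 1 := by linarith
      have ht : (0:ℝ) < 1 - P a := by
        rcases lt_or_eq_of_le hl1 with hlt | heq
        · linarith
        · exact absurd heq hpa
      set Q : ι → ℝ := fun i => P i / (1 - P a) with hQ
      have hQ0 : ∀ i ∈ t, 0 ≤ Q i := fun i hi =>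
        div_nonneg (hP0 i (Finset.mem_cons_of_mem hi)) ht.le
      have hQ1 : ∑ i ∈ t, Q i = 1 := by
        rw [hQ]
        simp only
        rw [← Finset.sum_div, eq_comm, eq_div_iff (ne_of_gt ht)]
        linarith
      have hIH := ih Q f hQ0 hQ1 (fun i hi => hf i (Finset.mem_cons_of_mem hi))
      have hhermsum : (∑ i ∈ t, Q i • f i).IsHermitian :=
        herm_sum t _ (fun i hi => herm_smul (hf i (Finset.mem_cons_of_mem hi)) (Q i))
      have hcc := hconc (P a) hl0 hl1 (f a) (∑ i ∈ t, Q i • f i)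
        (hf a (Finset.mem_cons_self a t)) hhermsum
      have e2 : (1 - P a) • ∑ i ∈ t, Q i • f i = ∑ i ∈ t, P i • f i := by
        rw [Finset.smul_sum]
        refine Finset.sum_congr rfl fun i hi => ?_
        rw [smul_smul, hQ]
        congr 1
        field_simp
      have e1 : ∑ i ∈ t, P i * Φ (f i) = (1 - P a) * ∑ i ∈ t, Q i * Φ (f i) := by
        rw [Finset.mul_sum]
        refine Finset.sum_congr rfl fun i hi => ?_
        rw [hQ]
        simp only
        field_simp
      rw [e2] at hcc
      have hmulIH := mul_le_mul_of_nonneg_left hIH ht.le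
      linarith [hcc, hmulIH]

/-- Jensen-type inequality for the Schur complement composed with a concave,
Loewner-nondecreasing criterion `Φ`: for positive semidefinite block matrices
`M l = [[A l, B l], [(B l)ᵀ, C l]]` and weights `P l ≥ 0` summing to one,
`∑ l, P l * Φ (S (M l)) ≤ Φ (S (∑ l, P l • M l))`, where `S` denotes the Schur
complement formed with any generalized inverse of the lower-right block. -/
theorem sum_criterion_schur_le
    (n m N : ℕ) (hn : 0 < n) (hm : 0 < m) (hN : 0 < N)
    (A : Fin N → Matrix (Fin n) (Fin n) ℝ)
    (B : Fin N → Matrix (Fin n) (Fin m) ℝ)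
    (C : Fin N → Matrix (Fin m) (Fin m) ℝ)
    (hM : ∀ l, (Matrix.fromBlocks (A l) (B l) (B l)ᵀ (C l)).PosSemidef)
    (P : Fin N → ℝ) (hP0 : ∀ l, 0 ≤ P l) (hP1 : ∑ l, P l = 1)
    (W : Fin N → Matrix (Fin m) (Fin m) ℝ)
    (hW : ∀ l, C l * W l * C l = C l)
    (Wsum : Matrix (Fin m) (Fin m) ℝ)
    (hWsum : (∑ l, P l • C l) * Wsum * (∑ l, P l • C l) = ∑ l, P l • C l)
    (Φ : Matrix (Fin n) (Fin n) ℝ → ℝ)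
    (hconc : ∀ lam : ℝ, 0 ≤ lam → lam ≤ 1 → ∀ M₁ M₂ : Matrix (Fin n) (Fin n) ℝ,
      M₁.IsHermitian → M₂.IsHermitian →
      lam * Φ M₁ + (1 - lam) * Φ M₂ ≤ Φ (lam • M₁ + (1 - lam) • M₂))
    (hmono : ∀ M₁ M₂ : Matrix (Fin n) (Fin n) ℝ, M₁.IsHermitian → M₂.IsHermitian →
      (M₂ - M₁).PosSemidef → Φ M₁ ≤ Φ M₂) :
    ∑ l, P l * Φ (A l - B l * W l * (B l)ᵀ) ≤
      Φ ((∑ l, P l • A l) - (∑ l, P l • B l) * Wsum * (∑ l, P l • B l)ᵀ) := by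
  classical
  -- abbreviations
  have hMbar : (Matrix.fromBlocks (∑ l, P l • A l) (∑ l, P l • B l)
      (∑ l, P l • B l)ᵀ (∑ l, P l • C l)).PosSemidef := by
    have e : Matrix.fromBlocks (∑ l, P l • A l) (∑ l, P l • B l)
        (∑ l, P l • B l)ᵀ (∑ l, P l • C l)
        = ∑ l, P l • Matrix.fromBlocks (A l) (B l) (B l)ᵀ (C l) := by
      ext i j
      rcases i with i | i <;> rcases j with j | j <;>
        simp [Matrix.sum_apply, Matrix.fromBlocks]
    rw [e]
    exact psd_sum _ _ (fun l _ => psd_smul (hM l) (hP0 l))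
  have hBWCsum : (∑ l, P l • B l) * Wsum * (∑ l, P l • C l) = (∑ l, P l • B l) :=
    genInv_range _ _ _ _ hMbar hWsum
  have hSbar_psd : ((∑ l, P l • A l) - (∑ l, P l • B l) * Wsum * (∑ l, P l • B l)ᵀ).PosSemidef :=
    schur_psd _ _ _ _ hMbar hWsum
  have hSl_psd : ∀ l, (A l - B l * W l * (B l)ᵀ).PosSemidef :=
    fun l => schur_psd _ _ _ _ (hM l) (hW l)
  set X : Matrix (Fin n) (Fin m) ℝ := (∑ l, P l • B l) * Wsum with hX
  have hdiff : (((∑ l, P l • A l) - (∑ l, P l • B l) * Wsum * (∑ l, P l • B l)ᵀ)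
      - ∑ l, P l • (A l - B l * W l * (B l)ᵀ)).PosSemidef := by
    have h1 : ∑ l, P l • (X * (B l)ᵀ) = X * (∑ l, P l • B l)ᵀ := by
      rw [Matrix.transpose_sum, Matrix.mul_sum]
      exact Finset.sum_congr rfl fun l _ => by rw [Matrix.transpose_smul, Matrix.mul_smul]
    have h2 : ∑ l, P l • (B l * Xᵀ) = (∑ l, P l • B l) * Xᵀ := by
      rw [Matrix.sum_mul]
      exact Finset.sum_congr rfl fun l _ => by rw [Matrix.smul_mul]
    have h3 : ∑ l, P l • (X * C l * Xᵀ) = X * (∑ l, P l • C l) * Xᵀ := by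
      rw [Matrix.mul_sum, Matrix.sum_mul]
      exact Finset.sum_congr rfl fun l _ => by rw [Matrix.mul_smul, Matrix.smul_mul]
    have hexp : ∑ l, P l • ((A l - X * (B l)ᵀ - B l * Xᵀ + X * C l * Xᵀ)
          - (A l - B l * W l * (B l)ᵀ))
        = ((∑ l, P l • A l) - (∑ l, P l • B l) * Wsum * (∑ l, P l • B l)ᵀ)
          - ∑ l, P l • (A l - B l * W l * (B l)ᵀ) := by
      simp only [smul_sub, smul_add, Finset.sum_add_distrib, Finset.sum_sub_distrib]
      rw [h1, h2, h3]
      have hX1 : X * (∑ l, P l • B l)ᵀ = (∑ l, P l • B l) * Wsum * (∑ l, P l • B l)ᵀ := by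
        rw [hX, Matrix.mul_assoc]
      have hX2 : X * (∑ l, P l • C l) * Xᵀ = (∑ l, P l • B l) * Xᵀ := by
        rw [hX, hBWCsum]
      rw [hX1, hX2]
      abel
    rw [← hexp]
    refine psd_sum _ _ fun l _ => psd_smul ?_ (hP0 l)
    exact schur_diff_psd _ _ _ _ (hM l) (hW l) X
  have hj : ∑ l, P l * Φ (A l - B l * W l * (B l)ᵀ)
      ≤ Φ (∑ l, P l • (A l - B l * W l * (B l)ᵀ)) :=
    jensen_concave Φ hconc Finset.univ P _ (fun l _ => hP0 l) hP1
      (fun l _ => (hSl_psd l).isHermitian)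
  refine hj.trans (hmono _ _ ?_ hSbar_psd.isHermitian hdiff)
  exact herm_sum _ _ fun l _ => herm_smul (hSl_psd l).isHermitian (P l)
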